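/- For Γ = ℤ and α a single injective endomorphism of A, the algebra B is isomorphic to the direct limit of the direct system (B_n, φ_n)_{n∈ℤ} where each B_n is the subalgebra D₀ of ℓ∞(ℤ, A) of elements ξ with ‖ξ(i)‖ → 0 as i → −∞ and (ξ(i)) norm-convergent as i → +∞ (identified with B_ℤ ⊗ A), and φ_n : B_n → B_{n+1} is given by (φ_n(ξ))(i) = α(ξ(i)) for i > n and ξ(i) for i ≤ n. The isomorphism ψ satisfies ψ(φ^n(1_n ⊗ a)) = μ_n(a), where φ^n : B_n → B_∞ are the canonical maps. -/

import Mathlib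

open scoped ENNReal

/-- For a single endomorphism `α` of `A` and `n ∈ ℤ`, the map `μ_n : A → ℓ∞(ℤ, A)`,
`(μ_n a)(m) = α^{m-n}(a)` for `m ≥ n` and `0` otherwise. -/
noncomputable def muZ {A : Type*} [NonUnitalCStarAlgebra A] (α : A →⋆ₙₐ[ℂ] A) (n : ℤ) (a : A) :
    lp (fun _ : ℤ => A) ∞ :=
  ⟨fun m => if n ≤ m then (⇑α)^[(m - n).toNat] a else 0, memℓp_infty ⟨‖a‖, by
    rintro r ⟨m, rfl⟩
    dsimp only
    split_ifs
    · generalize (m - n).toNat = k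
      induction k with
      | zero => simp
      | succ k ih =>
        rw [Function.iterate_succ_apply']
        exact (NonUnitalStarAlgHom.norm_apply_le α _).trans ih
    · simp⟩⟩

/-- `B = cl span {μ_n(a) : n ∈ ℤ, a ∈ A} ⊆ ℓ∞(ℤ, A)`. -/
noncomputable def BZ {A : Type*} [NonUnitalCStarAlgebra A] (α : A →⋆ₙₐ[ℂ] A) :
    Set (lp (fun _ : ℤ => A) ∞) :=
  closure (Submodule.span ℂ {ξ : lp (fun _ : ℤ => A) ∞ | ∃ n a, ξ = muZ α n a} : Set _)
open Filter in
/-- `D₀ = B_ℤ ⊗ A`: elements `ξ` of `ℓ∞(ℤ, A)` with `‖ξ(i)‖ → 0` as `i → -∞` and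
`ξ(i)` norm-convergent as `i → +∞`. -/
def D0 (A : Type*) [NonUnitalCStarAlgebra A] : Set (lp (fun _ : ℤ => A) ∞) :=
  {ξ | Tendsto (fun i : ℤ => ‖ξ i‖) atBot (nhds 0) ∧
    ∃ l : A, Tendsto (fun i : ℤ => ξ i) atTop (nhds l)}

/-- The connecting map `φ_n : B_n → B_{n+1}`: apply `α` beyond `n`. -/
noncomputable def phiZ {A : Type*} [NonUnitalCStarAlgebra A] (α : A →⋆ₙₐ[ℂ] A) (n : ℤ)
    (ξ : lp (fun _ : ℤ => A) ∞) : lp (fun _ : ℤ => A) ∞ :=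
  ⟨fun i => if i ≤ n then ξ i else α (ξ i), memℓp_infty ⟨‖ξ‖, by
    rintro r ⟨i, rfl⟩
    dsimp only
    split_ifs
    · exact lp.norm_apply_le_norm ENNReal.top_ne_zero ξ i
    · exact (NonUnitalStarAlgHom.norm_apply_le α _).trans
        (lp.norm_apply_le_norm ENNReal.top_ne_zero ξ i)⟩⟩

/-- The map `ψ^n : B_n → ℓ∞(ℤ, A)`: `(ψ^n ξ)(i) = α^{i-n}(ξ(i))` for `i ≥ n`,
`ξ(i)` for `i < n`. -/
noncomputable def psiZ {A : Type*} [NonUnitalCStarAlgebra A] (α : A →⋆ₙₐ[ℂ] A) (n : ℤ)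
    (ξ : lp (fun _ : ℤ => A) ∞) : lp (fun _ : ℤ => A) ∞ :=
  ⟨fun i => if n ≤ i then (⇑α)^[(i - n).toNat] (ξ i) else ξ i, memℓp_infty ⟨‖ξ‖, by
    rintro r ⟨i, rfl⟩
    dsimp only
    split_ifs
    · generalize (i - n).toNat = k
      induction k with
      | zero => exact lp.norm_apply_le_norm ENNReal.top_ne_zero ξ i
      | succ k ih =>
        rw [Function.iterate_succ_apply']
        exact (NonUnitalStarAlgHom.norm_apply_le α _).trans ih
    · exact lp.norm_apply_le_norm ENNReal.top_ne_zero ξ i⟩⟩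

/-- The element `1_n ⊗ a ∈ B_ℤ ⊗ A = D₀`. -/
noncomputable def oneTensorZ {A : Type*} [NonUnitalCStarAlgebra A] (n : ℤ) (a : A) :
    lp (fun _ : ℤ => A) ∞ :=
  ⟨fun i => if n ≤ i then a else 0, memℓp_infty ⟨‖a‖, by
    rintro r ⟨i, rfl⟩
    dsimp only
    split_ifs <;> simp⟩⟩

section Helpers
variable {A : Type*} [NonUnitalCStarAlgebra A] (α : A →⋆ₙₐ[ℂ] A)

lemma psiZ_apply (n : ℤ) (ξ : lp (fun _ : ℤ => A) ∞) (i : ℤ) :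
    psiZ α n ξ i = if n ≤ i then (⇑α)^[(i - n).toNat] (ξ i) else ξ i := rfl

lemma phiZ_apply (n : ℤ) (ξ : lp (fun _ : ℤ => A) ∞) (i : ℤ) :
    phiZ α n ξ i = if i ≤ n then ξ i else α (ξ i) := rfl

lemma muZ_apply (n : ℤ) (a : A) (m : ℤ) :
    muZ α n a m = if n ≤ m then (⇑α)^[(m - n).toNat] a else 0 := rfl

lemma oneTensorZ_apply (n : ℤ) (a : A) (i : ℤ) :
    oneTensorZ n a i = if n ≤ i then a else 0 := rfl

lemma iter_add (k : ℕ) (x y : A) : (⇑α)^[k] (x + y) = (⇑α)^[k] x + (⇑α)^[k] y := by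
  induction k with
  | zero => rfl
  | succ k ih => simp [Function.iterate_succ_apply', ih, map_add]

lemma iter_sub (k : ℕ) (x y : A) : (⇑α)^[k] (x - y) = (⇑α)^[k] x - (⇑α)^[k] y := by
  induction k with
  | zero => rfl
  | succ k ih => simp [Function.iterate_succ_apply', ih, map_sub]

lemma iter_smul (k : ℕ) (c : ℂ) (x : A) : (⇑α)^[k] (c • x) = c • (⇑α)^[k] x := by
  induction k with
  | zero => rfl
  | succ k ih => simp [Function.iterate_succ_apply', ih, map_smul]

lemma iter_norm (hinj : Function.Injective α) (k : ℕ) (x : A) : ‖(⇑α)^[k] x‖ = ‖x‖ := by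
  induction k with
  | zero => rfl
  | succ k ih =>
    rw [Function.iterate_succ_apply', NonUnitalStarAlgHom.norm_map α hinj, ih]

lemma psiZ_add (n : ℤ) (ξ η : lp (fun _ : ℤ => A) ∞) :
    psiZ α n (ξ + η) = psiZ α n ξ + psiZ α n η := by
  apply lp.ext
  funext i
  simp only [lp.coeFn_add, Pi.add_apply, psiZ_apply]
  split_ifs
  · exact iter_add α _ _ _
  · rfl

lemma psiZ_smul (n : ℤ) (c : ℂ) (ξ : lp (fun _ : ℤ => A) ∞) :
    psiZ α n (c • ξ) = c • psiZ α n ξ := by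
  apply lp.ext
  funext i
  simp only [lp.coeFn_smul, Pi.smul_apply, psiZ_apply]
  split_ifs
  · exact iter_smul α _ _ _
  · rfl

end Helpers

section Helpers2
open Filter
variable {A : Type*} [NonUnitalCStarAlgebra A] (α : A →⋆ₙₐ[ℂ] A)

lemma psiZ_phiZ (n : ℤ) (ξ : lp (fun _ : ℤ => A) ∞) :
    psiZ α (n + 1) (phiZ α n ξ) = psiZ α n ξ := by
  apply lp.ext
  funext i
  simp only [psiZ_apply, phiZ_apply]
  rcases lt_trichotomy i n with h | h | h
  · rw [if_neg (show ¬(n + 1 ≤ i) by omega), if_pos (show i ≤ n by omega),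
      if_neg (show ¬(n ≤ i) by omega)]
  · subst h
    rw [if_neg (show ¬(i + 1 ≤ i) by omega), if_pos le_rfl, if_pos le_rfl]
    simp
  · rw [if_pos (show n + 1 ≤ i by omega), if_neg (show ¬(i ≤ n) by omega),
      if_pos (show n ≤ i by omega)]
    have he : (i - n).toNat = (i - (n + 1)).toNat + 1 := by omega
    rw [he, Function.iterate_succ_apply]

lemma singleZ_eq (m : ℤ) (a : A) :
    (lp.single ∞ m a : lp (fun _ : ℤ => A) ∞) = muZ α m a - muZ α (m + 1) (α a) := by
  apply lp.ext
  funext i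
  rw [lp.coeFn_sub, Pi.sub_apply]
  rcases lt_trichotomy i m with h | h | h
  · rw [lp.single_apply_ne _ _ _ (by omega : i ≠ m), muZ_apply, muZ_apply,
      if_neg (by omega), if_neg (by omega), sub_zero]
  · subst h
    rw [lp.single_apply_self, muZ_apply, muZ_apply, if_pos le_rfl, if_neg (by omega)]
    simp
  · rw [lp.single_apply_ne _ _ _ (by omega : i ≠ m), muZ_apply, muZ_apply,
      if_pos (by omega), if_pos (by omega)]
    have he : (i - m).toNat = (i - (m + 1)).toNat + 1 := by omega
    rw [he, Function.iterate_succ_apply, sub_self]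

lemma D0_zero : (0 : lp (fun _ : ℤ => A) ∞) ∈ D0 A := by
  constructor
  · simpa [lp.coeFn_zero] using (tendsto_const_nhds : Tendsto (fun _ : ℤ => (0:ℝ)) atBot _)
  · exact ⟨0, by simpa [lp.coeFn_zero] using (tendsto_const_nhds :
      Tendsto (fun _ : ℤ => (0:A)) atTop _)⟩

lemma D0_add {ξ η : lp (fun _ : ℤ => A) ∞} (hξ : ξ ∈ D0 A) (hη : η ∈ D0 A) :
    ξ + η ∈ D0 A := by
  obtain ⟨hξ1, l, hl⟩ := hξ
  obtain ⟨hη1, l', hl'⟩ := hη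
  constructor
  · refine squeeze_zero (fun i => norm_nonneg _) (g := fun i => ‖ξ i‖ + ‖η i‖)
      (fun i => ?_) (by simpa using hξ1.add hη1)
    rw [lp.coeFn_add, Pi.add_apply]
    exact norm_add_le _ _
  · refine ⟨l + l', ?_⟩
    have := hl.add hl'
    simpa [lp.coeFn_add] using this

lemma D0_smul (c : ℂ) {ξ : lp (fun _ : ℤ => A) ∞} (hξ : ξ ∈ D0 A) : c • ξ ∈ D0 A := by
  obtain ⟨hξ1, l, hl⟩ := hξ
  constructor
  · have := hξ1.const_mul ‖c‖
    rw [mul_zero] at this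
    refine this.congr fun i => ?_
    rw [lp.coeFn_smul, Pi.smul_apply, norm_smul]
  · refine ⟨c • l, ?_⟩
    have := hl.const_smul c
    refine this.congr fun i => ?_
    rw [lp.coeFn_smul, Pi.smul_apply]

lemma phiZ_memD0 (hinj : Function.Injective α) (n : ℤ) {ξ : lp (fun _ : ℤ => A) ∞}
    (hξ : ξ ∈ D0 A) : phiZ α n ξ ∈ D0 A := by
  obtain ⟨hξ1, l, hl⟩ := hξ
  have hcont : Continuous α := (NonUnitalStarAlgHom.isometry α hinj).continuous
  constructor
  · refine hξ1.congr' ?_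
    filter_upwards [eventually_le_atBot n] with i hi
    rw [phiZ_apply, if_pos hi]
  · refine ⟨α l, ((hcont.tendsto l).comp hl).congr' ?_⟩
    filter_upwards [eventually_gt_atTop n] with i hi
    simp only [Function.comp_apply]
    rw [phiZ_apply, if_neg (not_le.mpr hi)]

lemma oneTensorZ_memD0 (n : ℤ) (a : A) : oneTensorZ n a ∈ D0 A := by
  constructor
  · refine (tendsto_const_nhds : Tendsto (fun _ : ℤ => (0:ℝ)) atBot _).congr' ?_
    filter_upwards [eventually_lt_atBot n] with i hi
    rw [oneTensorZ_apply, if_neg (by omega), norm_zero]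
  · refine ⟨a, (tendsto_const_nhds : Tendsto (fun _ : ℤ => a) atTop _).congr' ?_⟩
    filter_upwards [eventually_ge_atTop n] with i hi
    rw [oneTensorZ_apply, if_pos hi]

lemma psiZ_oneTensorZ (n : ℤ) (a : A) : psiZ α n (oneTensorZ n a) = muZ α n a := by
  apply lp.ext
  funext i
  simp only [psiZ_apply, oneTensorZ_apply, muZ_apply]
  split_ifs <;> rfl

lemma psiZ_norm (hinj : Function.Injective α) (n : ℤ) (ξ : lp (fun _ : ℤ => A) ∞) :
    ‖psiZ α n ξ‖ = ‖ξ‖ := by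
  rw [lp.norm_eq_ciSup, lp.norm_eq_ciSup]
  congr 1
  funext i
  rw [psiZ_apply]
  split_ifs
  · rw [iter_norm α hinj]
  · rfl

lemma psiZ_zero (n : ℤ) : psiZ α n (0 : lp (fun _ : ℤ => A) ∞) = 0 := by
  apply lp.ext
  funext i
  simp only [psiZ_apply, lp.coeFn_zero, Pi.zero_apply]
  split_ifs
  · exact Function.iterate_fixed (map_zero α) _
  · rfl

end Helpers2

section Helpers3
open Filter
variable {A : Type*} [NonUnitalCStarAlgebra A] (α : A →⋆ₙₐ[ℂ] A)

lemma psiZ_memBZ (hinj : Function.Injective α) (n : ℤ) {ξ : lp (fun _ : ℤ => A) ∞}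
    (hξ : ξ ∈ D0 A) : psiZ α n ξ ∈ BZ α := by
  classical
  obtain ⟨hbot, l, hl⟩ := hξ
  rw [BZ, Metric.mem_closure_iff]
  intro ε hε
  -- choose cutoffs
  have h1 : ∀ᶠ i in atBot, ‖ξ i‖ < ε / 2 := hbot.eventually_lt_const (half_pos hε)
  obtain ⟨K₀, hK₀⟩ := eventually_atBot.mp h1
  have h2 : ∀ᶠ i in atTop, ‖ξ i - l‖ < ε / 2 := by
    have := hl.eventually (Metric.ball_mem_nhds l (half_pos hε))
    filter_upwards [this] with i hi
    simpa [dist_eq_norm] using hi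
  obtain ⟨M₀, hM₀⟩ := eventually_atTop.mp h2
  set K : ℤ := min (n - 1) K₀ with hK
  set M : ℤ := max n M₀ with hM
  set η : lp (fun _ : ℤ => A) ∞ :=
    (∑ m ∈ Finset.Icc (K + 1) (M - 1), lp.single ∞ m (psiZ α n ξ m)) +
      muZ α M ((⇑α)^[(M - n).toNat] l) with hη
  have hsingle : ∀ (m : ℤ) (c : A) (i : ℤ),
      (lp.single ∞ m c : lp (fun _ : ℤ => A) ∞) i = if i = m then c else 0 := by
    intro m c i
    rcases eq_or_ne i m with h | h
    · subst h; simp [lp.single_apply_self]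
    · simp [lp.single_apply_ne _ _ _ h, h]
  have hηapp : ∀ i : ℤ, η i =
      (if i ∈ Finset.Icc (K + 1) (M - 1) then psiZ α n ξ i else 0) +
        muZ α M ((⇑α)^[(M - n).toNat] l) i := by
    intro i
    rw [hη, lp.coeFn_add, Pi.add_apply]
    congr 1
    rw [lp.coeFn_sum, Finset.sum_apply]
    simp_rw [hsingle]
    rw [Finset.sum_ite_eq (Finset.Icc (K + 1) (M - 1)) i (fun m => psiZ α n ξ m)]
  refine ⟨η, ?_, ?_⟩
  · -- η ∈ span
    refine Submodule.add_mem _ (Submodule.sum_mem _ fun m _ => ?_)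
      (Submodule.subset_span ⟨M, _, rfl⟩)
    rw [singleZ_eq α]
    exact sub_mem (Submodule.subset_span ⟨m, _, rfl⟩) (Submodule.subset_span ⟨m + 1, _, rfl⟩)
  · -- dist < ε
    rw [dist_eq_norm]
    have hle : ‖psiZ α n ξ - η‖ ≤ ε / 2 := by
      refine lp.norm_le_of_forall_le (by positivity) fun i => ?_
      rw [lp.coeFn_sub, Pi.sub_apply, hηapp i]
      rcases le_or_gt i K with hiK | hiK
      · -- small i: everything but ξ i vanishes
        rw [if_neg (by simp [Finset.mem_Icc]; omega), muZ_apply, if_neg (by omega),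
          psiZ_apply, if_neg (by omega)]
        simpa using (hK₀ i (le_trans hiK (min_le_right _ _))).le
      · rcases le_or_gt M i with hiM | hiM
        · -- large i
          rw [if_neg (by simp [Finset.mem_Icc]; omega), muZ_apply, if_pos (by omega),
            psiZ_apply, if_pos (by omega), zero_add]
          rw [← Function.iterate_add_apply]
          have he : (i - M).toNat + (M - n).toNat = (i - n).toNat := by omega
          rw [he, ← iter_sub]
          rw [iter_norm α hinj]
          have := hM₀ i (le_trans (le_max_right _ _) hiM)
          linarith
        · -- middle
          rw [if_pos (by simp [Finset.mem_Icc]; omega), muZ_apply, if_neg (by omega),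
            add_zero, sub_self, norm_zero]
          positivity
    linarith

end Helpers3

section Helpers4
open Filter
variable {A : Type*} [NonUnitalCStarAlgebra A] (α : A →⋆ₙₐ[ℂ] A)

lemma psiZ_image_mono (hinj : Function.Injective α) {m n : ℤ} (h : m ≤ n) :
    psiZ α m '' D0 A ⊆ psiZ α n '' D0 A := by
  refine Int.le_induction (motive := fun k _ => psiZ α m '' D0 A ⊆ psiZ α k '' D0 A) subset_rfl (fun n _ ih => ih.trans ?_) n h
  rintro x ⟨ξ, hξ, rfl⟩
  exact ⟨phiZ α n ξ, phiZ_memD0 α hinj n hξ, psiZ_phiZ α n ξ⟩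

lemma closure_union_eq (hinj : Function.Injective α) :
    closure (⋃ n : ℤ, psiZ α n '' D0 A) = BZ α := by
  apply Set.Subset.antisymm
  · refine closure_minimal (Set.iUnion_subset fun n => ?_) isClosed_closure
    rintro x ⟨ξ, hξ, rfl⟩
    exact psiZ_memBZ α hinj n hξ
  · refine closure_mono ?_
    intro x hx
    induction hx using Submodule.span_induction with
    | mem x hx =>
      obtain ⟨n, a, rfl⟩ := hx
      exact Set.mem_iUnion.2 ⟨n, oneTensorZ n a, oneTensorZ_memD0 n a, psiZ_oneTensorZ α n a⟩
    | zero =>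
      exact Set.mem_iUnion.2 ⟨0, 0, D0_zero, psiZ_zero α 0⟩
    | add x y hx hy ihx ihy =>
      obtain ⟨m, hm⟩ := Set.mem_iUnion.1 ihx
      obtain ⟨k, hk⟩ := Set.mem_iUnion.1 ihy
      obtain ⟨ξ, hξ, rfl⟩ := psiZ_image_mono α hinj (le_max_left m k) hm
      obtain ⟨ζ, hζ, rfl⟩ := psiZ_image_mono α hinj (le_max_right m k) hk
      exact Set.mem_iUnion.2 ⟨max m k, ξ + ζ, D0_add hξ hζ, (psiZ_add α _ ξ ζ).symm ▸ rfl⟩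
    | smul c x hx ihx =>
      obtain ⟨m, ξ, hξ, rfl⟩ := Set.mem_iUnion.1 ihx
      exact Set.mem_iUnion.2 ⟨m, c • ξ, D0_smul c hξ, psiZ_smul α m c ξ⟩

end Helpers4


/-- For `Γ = ℤ` and `α` a single injective endomorphism, `B` is (isometrically isomorphic
to) the direct limit of the system `(B_n, φ_n)` with `B_n = B_ℤ ⊗ A = D₀`: the maps
`ψ^n` are compatible with the connecting maps, isometric, take values in `B`, carry
`1_n ⊗ a` to `μ_n(a)`, and their images have dense union in `B`. -/
theorem BZ_is_direct_limit {A : Type*} [NonUnitalCStarAlgebra A] (α : A →⋆ₙₐ[ℂ] A)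
    (hinj : Function.Injective α) :
    (∀ (n : ℤ) (ξ : lp (fun _ : ℤ => A) ∞), ξ ∈ D0 A → phiZ α n ξ ∈ D0 A) ∧
    (∀ (n : ℤ) (ξ : lp (fun _ : ℤ => A) ∞), psiZ α (n + 1) (phiZ α n ξ) = psiZ α n ξ) ∧
    (∀ (n : ℤ) (ξ : lp (fun _ : ℤ => A) ∞), ξ ∈ D0 A → psiZ α n ξ ∈ BZ α) ∧
    (∀ (n : ℤ) (ξ : lp (fun _ : ℤ => A) ∞), ξ ∈ D0 A → ‖psiZ α n ξ‖ = ‖ξ‖) ∧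
    (∀ (n : ℤ) (a : A), oneTensorZ n a ∈ D0 A ∧ psiZ α n (oneTensorZ n a) = muZ α n a) ∧
    closure (⋃ n : ℤ, psiZ α n '' D0 A) = BZ α := by
  exact ⟨fun n ξ hξ => phiZ_memD0 α hinj n hξ,
    fun n ξ => psiZ_phiZ α n ξ,
    fun n ξ hξ => psiZ_memBZ α hinj n hξ,
    fun n ξ _ => psiZ_norm α hinj n ξ,
    fun n a => ⟨oneTensorZ_memD0 n a, psiZ_oneTensorZ α n a⟩,
    closure_union_eq α hinj⟩
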